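/- Suppose there exist feasible x̄, ȳ of BP with x̄ + ȳ ≤ e, and suppose Mx = d with M ∈ ℝ^{m×n} of full row rank is a minimal equation system of P_BP. Then dim P_BPD' = 3n − 2·rank(M). -/

import Mathlib

open Matrix Finset

def BinaryVec {n : ℕ} (x : Fin n → ℝ) : Prop := ∀ i, x i = 0 ∨ x i = 1

/-- Feasibility for BP: `Ax ≤ b`, `x ∈ {0,1}ⁿ`. -/
def FeasBP {n m : ℕ} (A : Matrix (Fin m) (Fin n) ℝ) (b : Fin m → ℝ)
    (x : Fin n → ℝ) : Prop :=
  BinaryVec x ∧ A.mulVec x ≤ b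

/-- Feasibility for BPD' : `Ax ≤ b`, `Ay ≤ b`, `x + y - z ≤ e`, `x, y, z ∈ {0,1}ⁿ`. -/
def FeasBPD' {n m : ℕ} (A : Matrix (Fin m) (Fin n) ℝ) (b : Fin m → ℝ)
    (x y z : Fin n → ℝ) : Prop :=
  FeasBP A b x ∧ FeasBP A b y ∧ BinaryVec z ∧ (∀ i, x i + y i - z i ≤ 1)

/-- The polytope underlying BP: the convex hull of its feasible set. -/
def polyBP {n m : ℕ} (A : Matrix (Fin m) (Fin n) ℝ) (b : Fin m → ℝ) :
    Set (Fin n → ℝ) :=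
  convexHull ℝ {x | FeasBP A b x}

/-- The diameter polytope `P_BPD'` in `ℝⁿ × ℝⁿ × ℝⁿ ≅ ℝ^{3n}`. -/
def polyBPD' {n m : ℕ} (A : Matrix (Fin m) (Fin n) ℝ) (b : Fin m → ℝ) :
    Set ((Fin n → ℝ) × (Fin n → ℝ) × (Fin n → ℝ)) :=
  convexHull ℝ {p | FeasBPD' A b p.1 p.2.1 p.2.2}

/-- The dimension of a polytope: the dimension of its affine hull. -/
noncomputable def polyDim {V : Type*} [AddCommGroup V] [Module ℝ V]
    (P : Set V) : ℕ :=
  Module.finrank ℝ (affineSpan ℝ P).direction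

/-- `f p ≤ a₀` is a facet-defining inequality of `P`: it is valid on `P` and the
face it defines is nonempty of dimension `dim P - 1`. -/
noncomputable def IsFacet {V : Type*} [AddCommGroup V] [Module ℝ V]
    (P : Set V) (f : V → ℝ) (a₀ : ℝ) : Prop :=
  (∀ p ∈ P, f p ≤ a₀) ∧ ({p ∈ P | f p = a₀}).Nonempty ∧
    polyDim {p ∈ P | f p = a₀} + 1 = polyDim P

lemma binary_le_one {n : ℕ} {x : Fin n → ℝ} (hx : BinaryVec x) (i : Fin n) :
    x i ≤ 1 := by rcases hx i with h | h <;> simp [h]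

lemma binary_nonneg {n : ℕ} {x : Fin n → ℝ} (hx : BinaryVec x) (i : Fin n) :
    0 ≤ x i := by rcases hx i with h | h <;> simp [h]

theorem stmt10 {n m k : ℕ} (A : Matrix (Fin m) (Fin n) ℝ) (b : Fin m → ℝ)
    (hne : ∃ x, FeasBP A b x)
    (hcomp : ∃ x y, FeasBP A b x ∧ FeasBP A b y ∧ ∀ i, x i + y i ≤ 1)
    (M : Matrix (Fin k) (Fin n) ℝ) (d : Fin k → ℝ)
    (hrank : M.rank = k)
    (heq : ∀ x, FeasBP A b x → M.mulVec x = d)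
    (hmax : ∀ (u : Fin n → ℝ) (u₀ : ℝ), (∀ x, FeasBP A b x → ∑ i, u i * x i = u₀) →
      ∃ lam : Fin k → ℝ, u = M.vecMul lam ∧ u₀ = ∑ j, lam j * d j) :
    polyDim (polyBPD' A b) = 3 * n - 2 * M.rank := by
  classical
  obtain ⟨xb, yb, hxb, hyb, hxy⟩ := hcomp
  set V := (Fin n → ℝ) × (Fin n → ℝ) × (Fin n → ℝ) with hV
  set S : Set V := {p | FeasBPD' A b p.1 p.2.1 p.2.2} with hS
  set e : Fin n → ℝ := fun _ => 1 with he
  have hone : BinaryVec e := fun _ => Or.inr rfl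
  have memXYE : ∀ x y : Fin n → ℝ, FeasBP A b x → FeasBP A b y →
      ((x, y, e) : V) ∈ S := by
    intro x y hx hy
    refine ⟨hx, hy, hone, fun i => ?_⟩
    have := binary_le_one hx.1 i
    have := binary_le_one hy.1 i
    simp only [he]
    linarith
  have memZ : ∀ z : Fin n → ℝ, BinaryVec z → ((xb, yb, z) : V) ∈ S := by
    intro z hz
    refine ⟨hxb, hyb, hz, fun i => ?_⟩
    have := hxy i
    have := binary_nonneg hz i
    linarith
  -- the candidate direction space
  set F : V →ₗ[ℝ] (Fin k → ℝ) × (Fin k → ℝ) :=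
    (M.mulVecLin.comp (LinearMap.fst ℝ (Fin n → ℝ) ((Fin n → ℝ) × (Fin n → ℝ)))).prod
      (M.mulVecLin.comp ((LinearMap.fst ℝ (Fin n → ℝ) (Fin n → ℝ)).comp
        (LinearMap.snd ℝ (Fin n → ℝ) ((Fin n → ℝ) × (Fin n → ℝ))))) with hF
  have hFapply : ∀ p : V, F p = (M.mulVec p.1, M.mulVec p.2.1) := fun p => rfl
  set W : Submodule ℝ V := LinearMap.ker F with hW
  set U : Submodule ℝ V := vectorSpan ℝ S with hU
  -- U ≤ W
  have hUW : U ≤ W := by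
    rw [hU, vectorSpan_def, Submodule.span_le]
    rintro v ⟨p, hp, q, hq, rfl⟩
    have hp' : p ∈ S := hp
    have hq' : q ∈ S := hq
    simp only [SetLike.mem_coe, hW, LinearMap.mem_ker]
    have hsub : (p -ᵥ q : V) = p - q := rfl
    rw [hsub, map_sub, hFapply, hFapply, heq _ hp'.1, heq _ hq'.1,
      heq _ hp'.2.1, heq _ hq'.2.1]
    simp
  -- W ≤ U via dual annihilators
  have hWU : W ≤ U := by
    rw [← Subspace.dualAnnihilator_le_dualAnnihilator_iff]
    intro φ hφ
    rw [Submodule.mem_dualAnnihilator] at hφ ⊢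
    -- φ is constant on S
    have hconst : ∀ p ∈ S, ∀ q ∈ S, φ p = φ q := by
      intro p hp q hq
      have h0 : φ (p - q) = 0 := hφ _ (vsub_mem_vectorSpan ℝ hp hq)
      rw [map_sub, sub_eq_zero] at h0
      exact h0
    -- decomposition of φ along coordinates
    set u : Fin n → ℝ := fun i => φ ((Pi.single i 1, 0, 0) : V) with hu
    set v : Fin n → ℝ := fun i => φ ((0, Pi.single i 1, 0) : V) with hv
    set w : Fin n → ℝ := fun i => φ ((0, 0, Pi.single i 1) : V) with hw
    have hsingle : ∀ x : Fin n → ℝ, x = ∑ i, x i • (Pi.single i 1 : Fin n → ℝ) := by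
      intro x
      simp [← Pi.single_smul, Finset.univ_sum_single]
    have hφ1 : ∀ x : Fin n → ℝ, φ ((x, 0, 0) : V) = ∑ i, u i * x i := by
      intro x
      have hxd : ((x, 0, 0) : V) = ∑ i, x i • ((Pi.single i 1, 0, 0) : V) := by
        refine Prod.ext ?_ (Prod.ext ?_ ?_) <;>
          simp [Prod.fst_sum, Prod.snd_sum, ← hsingle x]
      rw [hxd, map_sum]
      exact Finset.sum_congr rfl fun i _ => by rw [_root_.map_smul, smul_eq_mul, mul_comm]
    have hφ2 : ∀ y : Fin n → ℝ, φ ((0, y, 0) : V) = ∑ i, v i * y i := by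
      intro y
      have hyd : ((0, y, 0) : V) = ∑ i, y i • ((0, Pi.single i 1, 0) : V) := by
        refine Prod.ext ?_ (Prod.ext ?_ ?_) <;>
          simp [Prod.fst_sum, Prod.snd_sum, ← hsingle y]
      rw [hyd, map_sum]
      exact Finset.sum_congr rfl fun i _ => by rw [_root_.map_smul, smul_eq_mul, mul_comm]
    have hφ3 : ∀ z : Fin n → ℝ, φ ((0, 0, z) : V) = ∑ i, w i * z i := by
      intro z
      have hzd : ((0, 0, z) : V) = ∑ i, z i • ((0, 0, Pi.single i 1) : V) := by
        refine Prod.ext ?_ (Prod.ext ?_ ?_) <;>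
          simp [Prod.fst_sum, Prod.snd_sum, ← hsingle z]
      rw [hzd, map_sum]
      exact Finset.sum_congr rfl fun i _ => by rw [_root_.map_smul, smul_eq_mul, mul_comm]
    have hdecomp : ∀ p : V, φ p = φ ((p.1, 0, 0) : V) + φ ((0, p.2.1, 0) : V)
        + φ ((0, 0, p.2.2) : V) := by
      intro p
      have hsplit : p = ((p.1, 0, 0) : V) + ((0, p.2.1, 0) : V) + ((0, 0, p.2.2) : V) := by
        refine Prod.ext ?_ (Prod.ext ?_ ?_) <;> simp
      conv_lhs => rw [hsplit]
      rw [map_add, map_add]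
    -- Step A : w = 0
    have hwz : ∀ i, w i = 0 := by
      intro i
      have hbin : BinaryVec (Pi.single i 1 : Fin n → ℝ) := by
        intro j
        rcases eq_or_ne j i with h | h <;> simp [Pi.single_apply, h]
      have hzero : BinaryVec (0 : Fin n → ℝ) := fun _ => Or.inl rfl
      have h1 := hconst _ (memZ _ hbin) _ (memZ _ hzero)
      rw [hdecomp ((xb, yb, Pi.single i 1) : V), hdecomp ((xb, yb, 0) : V)] at h1
      simp only [map_zero] at h1
      have : φ ((0, 0, Pi.single i 1) : V) = φ ((0, 0, (0 : Fin n → ℝ)) : V) := by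
        linarith
      rw [show ((0, 0, (0 : Fin n → ℝ)) : V) = 0 from rfl, map_zero] at this
      simpa [hw] using this
    -- Step B : u and v lie in the row space of M
    set c : ℝ := φ ((xb, yb, e) : V) with hc
    have hufeas : ∀ x, FeasBP A b x → ∑ i, u i * x i = c - φ ((0, yb, e) : V) := by
      intro x hx
      have h1 := hconst _ (memXYE x yb hx hyb) _ (memXYE xb yb hxb hyb)
      have h2 : ((x, yb, e) : V) = ((x, 0, 0) : V) + ((0, yb, e) : V) := by
        refine Prod.ext ?_ (Prod.ext ?_ ?_) <;> simp
      rw [h2, map_add, hφ1] at h1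
      linarith
    have hvfeas : ∀ y, FeasBP A b y → ∑ i, v i * y i = c - φ ((xb, 0, e) : V) := by
      intro y hy
      have h1 := hconst _ (memXYE xb y hxb hy) _ (memXYE xb yb hxb hyb)
      have h2 : ((xb, y, e) : V) = ((0, y, 0) : V) + ((xb, 0, e) : V) := by
        refine Prod.ext ?_ (Prod.ext ?_ ?_) <;> simp
      rw [h2, map_add, hφ2] at h1
      linarith
    obtain ⟨lam, hlam, -⟩ := hmax u _ hufeas
    obtain ⟨mu, hmu, -⟩ := hmax v _ hvfeas
    -- Step C : φ vanishes on W
    intro p hp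
    rw [hW, LinearMap.mem_ker, hFapply, Prod.mk_eq_zero] at hp
    rw [hdecomp p, hφ1, hφ2, hφ3]
    have e1 : ∑ i, u i * p.1 i = 0 := by
      have : M.vecMul lam ⬝ᵥ p.1 = lam ⬝ᵥ M.mulVec p.1 := (Matrix.dotProduct_mulVec _ _ _).symm
      rw [hp.1] at this
      simpa [hlam, dotProduct] using this
    have e2 : ∑ i, v i * p.2.1 i = 0 := by
      have : M.vecMul mu ⬝ᵥ p.2.1 = mu ⬝ᵥ M.mulVec p.2.1 := (Matrix.dotProduct_mulVec _ _ _).symm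
      rw [hp.2] at this
      simpa [hmu, dotProduct] using this
    have e3 : ∑ i, w i * p.2.2 i = 0 := by
      simp [hwz]
    rw [e1, e2, e3]
    ring
  -- dimension count
  have hMsurj : Function.Surjective M.mulVecLin := by
    rw [← LinearMap.range_eq_top]
    apply Submodule.eq_top_of_finrank_eq
    have : Module.finrank ℝ (Fin k → ℝ) = k := by simp
    rw [this]
    exact hrank
  have hFsurj : Function.Surjective F := by
    rintro ⟨a, c⟩
    obtain ⟨x, hx⟩ := hMsurj a
    obtain ⟨y, hy⟩ := hMsurj c
    refine ⟨(x, y, 0), ?_⟩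
    rw [hFapply]
    simp only [Matrix.mulVecLin_apply] at hx hy
    simp [hx, hy]
  have hrn := LinearMap.finrank_range_add_finrank_ker F
  rw [LinearMap.range_eq_top.mpr hFsurj, finrank_top] at hrn
  have hcod : Module.finrank ℝ ((Fin k → ℝ) × (Fin k → ℝ)) = k + k := by
    simp [Module.finrank_prod]
  have hdom : Module.finrank ℝ V = n + (n + n) := by
    show Module.finrank ℝ ((Fin n → ℝ) × (Fin n → ℝ) × (Fin n → ℝ)) = n + (n + n)
    simp [Module.finrank_prod]
  rw [hcod, hdom, ← hW] at hrn
  have hkn : k ≤ n := by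
    have := M.rank_le_card_width
    rw [hrank] at this
    simpa using this
  have hUeq : U = W := le_antisymm hUW hWU
  have : polyDim (polyBPD' A b) = Module.finrank ℝ U := by
    rw [polyDim, polyBPD', affineSpan_convexHull, direction_affineSpan]
  rw [this, hUeq, hrank]
  omega
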